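/- Let K>0. Let u:ℝ⁴→ℝ be continuous with u(x) = O(|x|^K) as |x|→∞, and let v:ℝ⁴→ℝ be a nonnegative C² function satisfying −Δv(x) = u(x)² for all x∈ℝ⁴ and ∫_{ℝ⁴} v(x)⁴ dx < ∞. Then v(x) = O(|x|^{2K}) as |x|→∞. -/

import Mathlib

open MeasureTheory Real Filter

/-- The Euclidean Laplacian of a real-valued function on `ℝⁿ`, as the sum of the
pure second derivatives in the coordinate directions. -/
noncomputable def lap (n : ℕ) (f : EuclideanSpace ℝ (Fin n) → ℝ)
    (x : EuclideanSpace ℝ (Fin n)) : ℝ :=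
  ∑ i : Fin n, iteratedFDeriv ℝ 2 f x ![EuclideanSpace.single i 1, EuclideanSpace.single i 1]

noncomputable def p (w : ℝ) : ℝ := w * max w 0

lemma p_hasDerivAt (w : ℝ) : HasDerivAt p (2 * max w 0) w := by
  rcases lt_trichotomy w 0 with h | rfl | h
  · have h0 : max w 0 = 0 := max_eq_right h.le
    rw [h0, mul_zero]
    have : HasDerivAt (fun _ : ℝ => (0:ℝ)) 0 w := hasDerivAt_const w 0
    apply this.congr_of_eventuallyEq
    filter_upwards [Iio_mem_nhds h] with y hy
    simp [p, max_eq_right (le_of_lt (Set.mem_Iio.mp hy))]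
  · rw [hasDerivAt_iff_tendsto_slope]
    have heq : (slope p 0) =ᶠ[nhdsWithin 0 {(0:ℝ)}ᶜ] fun h => max h 0 := by
      filter_upwards [self_mem_nhdsWithin] with h hh
      have hne : h ≠ 0 := hh
      simp only [slope, p, vsub_eq_sub, sub_zero, zero_mul, max_self, smul_eq_mul]
      field_simp
    rw [Filter.tendsto_congr' heq]
    have : Filter.Tendsto (fun h : ℝ => max h 0) (nhds 0) (nhds (max 0 0)) :=
      (continuous_id.max continuous_const).tendsto 0
    simp only [max_self] at this
    simpa using this.mono_left nhdsWithin_le_nhds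
  · have h0 : max w 0 = w := max_eq_left h.le
    rw [h0]
    have : HasDerivAt (fun y : ℝ => y * y) (1 * w + w * 1) w := (hasDerivAt_id w).mul (hasDerivAt_id w)
    have h2 : HasDerivAt (fun y : ℝ => y * y) (2 * w) w := by convert this using 1; ring
    apply h2.congr_of_eventuallyEq
    filter_upwards [Ioi_mem_nhds h] with y hy
    simp [p, max_eq_left (le_of_lt (Set.mem_Ioi.mp hy))]

abbrev E4 := EuclideanSpace ℝ (Fin 4)

noncomputable def Q (z : E4) : ℝ := ∑ i, (z i)^2

noncomputable def QL (z : E4) : E4 →L[ℝ] ℝ :=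
  ∑ i : Fin 4, (2 * z i ^ 1) • (EuclideanSpace.proj i : E4 →L[ℝ] ℝ)

lemma hasFDerivAt_Q (z : E4) : HasFDerivAt Q (QL z) z := by
  apply HasFDerivAt.fun_sum
  intro i _
  have hp : HasFDerivAt (fun y : E4 => y i) (EuclideanSpace.proj i : E4 →L[ℝ] ℝ) z :=
    (EuclideanSpace.proj i : E4 →L[ℝ] ℝ).hasFDerivAt
  exact (hasDerivAt_pow 2 (z i)).comp_hasFDerivAt z hp

lemma QL_single (z : E4) (j : Fin 4) : QL z (EuclideanSpace.single j (1:ℝ)) = 2 * z j := by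
  simp [QL, ContinuousLinearMap.sum_apply, EuclideanSpace.single_apply]

lemma clm_apply_eq_sum (L : E4 →L[ℝ] ℝ) (z : E4) :
    L z = ∑ i, z i * L (EuclideanSpace.single i 1) := by
  have hz : z = ∑ i, z i • EuclideanSpace.single i (1:ℝ) := by
    have := (EuclideanSpace.basisFun (Fin 4) ℝ).sum_repr z
    simp only [EuclideanSpace.basisFun_repr, EuclideanSpace.basisFun_apply] at this
    exact this.symm
  conv_lhs => rw [hz]
  rw [map_sum]
  simp [smul_eq_mul]

lemma Q_eq_norm_sq (z : E4) : Q z = ‖z‖ ^ 2 := by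
  rw [EuclideanSpace.norm_eq, sq_sqrt (by positivity)]
  simp [Q, Real.norm_eq_abs, sq_abs]

lemma Q_nonneg (z : E4) : 0 ≤ Q z := by rw [Q_eq_norm_sq]; positivity

noncomputable def Psi (z : E4) : ℝ := -p (1 - Q z)
noncomputable def psi (z : E4) : ℝ := 4 * max (1 - Q z) 0

lemma hasFDerivAt_Psi (z : E4) :
    HasFDerivAt Psi ((2 * max (1 - Q z) 0) • QL z) z := by
  have h1 : HasFDerivAt (fun z => 1 - Q z) (-QL z) z := (hasFDerivAt_Q z).const_sub 1
  have h2 : HasDerivAt (fun w => -p w) (-(2 * max (1 - Q z) 0)) (1 - Q z) :=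
    (p_hasDerivAt (1 - Q z)).neg
  have := h2.comp_hasFDerivAt z h1
  rw [neg_smul_neg] at this
  exact this

lemma fderiv_Psi_single (z : E4) (i : Fin 4) :
    fderiv ℝ Psi z (EuclideanSpace.single i 1) = psi z * z i := by
  rw [(hasFDerivAt_Psi z).fderiv]
  simp [QL_single, psi]
  ring

lemma Psi_nonpos (z : E4) : Psi z ≤ 0 := by
  have : 0 ≤ p (1 - Q z) := by
    unfold p
    rcases le_or_gt (1 - Q z) 0 with h | h
    · rw [max_eq_right h]; simp
    · rw [max_eq_left h.le]; positivity
  unfold Psi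
  exact neg_nonpos.mpr this

lemma neg_Psi_le_one (z : E4) : -Psi z ≤ 1 := by
  simp only [Psi, neg_neg, p]
  rcases le_or_gt (1 - Q z) 0 with h | h
  · rw [max_eq_right h]; simp
  · rw [max_eq_left h.le]
    nlinarith [Q_nonneg z]

lemma Psi_zero_of (z : E4) (h : 1 ≤ Q z) : Psi z = 0 := by
  simp [Psi, p, max_eq_right (by linarith : 1 - Q z ≤ 0)]

lemma psi_zero_of (z : E4) (h : 1 ≤ Q z) : psi z = 0 := by
  simp [psi, max_eq_right (by linarith : 1 - Q z ≤ 0)]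

lemma psi_nonneg (z : E4) : 0 ≤ psi z :=
  mul_nonneg (by norm_num) (le_max_right _ _)

lemma psi_le_four (z : E4) : psi z ≤ 4 := by
  simp only [psi]
  have : max (1 - Q z) 0 ≤ 1 := by
    apply max_le _ zero_le_one
    have := Q_nonneg z; linarith
  linarith

lemma continuous_Q : Continuous Q := by
  apply continuous_finset_sum
  intro i _
  exact ((EuclideanSpace.proj i : E4 →L[ℝ] ℝ).continuous).pow 2

lemma continuous_psi : Continuous psi :=
  continuous_const.mul ((continuous_const.sub continuous_Q).max continuous_const)

lemma continuous_p : Continuous p := continuous_id.mul (continuous_id.max continuous_const)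

lemma continuous_Psi : Continuous Psi := (continuous_p.comp (continuous_const.sub continuous_Q)).neg

lemma support_subset_Psi : Function.support Psi ⊆ Metric.closedBall 0 1 := by
  intro z hz
  simp only [Function.mem_support] at hz
  by_contra hc
  apply hz
  apply Psi_zero_of
  rw [Q_eq_norm_sq]
  have : 1 < ‖z‖ := by simpa [Metric.mem_closedBall] using hc
  nlinarith

lemma support_subset_psi : Function.support psi ⊆ Metric.closedBall 0 1 := by
  intro z hz
  simp only [Function.mem_support] at hz
  by_contra hc
  apply hz
  apply psi_zero_of
  rw [Q_eq_norm_sq]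
  have : 1 < ‖z‖ := by simpa [Metric.mem_closedBall] using hc
  nlinarith

lemma hcs_Psi : HasCompactSupport Psi :=
  HasCompactSupport.of_support_subset_isCompact (isCompact_closedBall 0 1) support_subset_Psi

lemma hcs_psi : HasCompactSupport psi :=
  HasCompactSupport.of_support_subset_isCompact (isCompact_closedBall 0 1) support_subset_psi

lemma integrable_of_cont_supp (h : E4 → ℝ) (hc : Continuous h)
    (hs : Function.support h ⊆ Metric.closedBall 0 1) : Integrable h :=
  hc.integrable_of_hasCompactSupport
    (HasCompactSupport.of_support_subset_isCompact (isCompact_closedBall 0 1) hs)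

lemma F_hasDeriv (v : E4 → ℝ) (hv : ContDiff ℝ 2 v) (x₀ : E4) (t₀ : ℝ) :
    HasDerivAt (fun t => ∫ z, v (x₀ + t • z) * psi z)
      (∫ z, (fderiv ℝ v (x₀ + t₀ • z) z) * psi z) t₀ := by
  have hD : Continuous (fderiv ℝ v) := (hv.fderiv_right (m := 1) (by norm_num)).continuous
  obtain ⟨C₀, hC₀⟩ : ∃ C, ∀ y ∈ Metric.closedBall x₀ (|t₀|+1), ‖fderiv ℝ v y‖ ≤ C :=
    (isCompact_closedBall x₀ (|t₀|+1)).exists_bound_of_continuousOn hD.continuousOn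
  have hvc : Continuous v := hv.continuous
  have hdiffv : Differentiable ℝ v := hv.differentiable (by norm_num)
  have path : ∀ (t : ℝ) (z : E4), HasDerivAt (fun s : ℝ => x₀ + s • z) z t := by
    intro t z
    have h1 : HasDerivAt (fun s : ℝ => s • z) ((1:ℝ) • z) t := (hasDerivAt_id t).smul_const z
    simpa using h1.const_add x₀
  have key := hasDerivAt_integral_of_dominated_loc_of_deriv_le (μ := (volume : Measure E4))
      (F := fun t z => v (x₀ + t • z) * psi z)
      (F' := fun t z => (fderiv ℝ v (x₀ + t • z) z) * psi z)
      (x₀ := t₀) (bound := fun z => (max C₀ 0) * psi z)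
      (s := Metric.ball t₀ 1) (Metric.ball_mem_nhds t₀ one_pos)
      (Filter.Eventually.of_forall (fun t => by
        exact ((hvc.comp (continuous_const.add (continuous_id.const_smul t))).mul
          continuous_psi).aestronglyMeasurable))
      ?_ ?_ ?_ ?_ ?_
  · exact key.2
  · -- Integrable (F t₀)
    apply integrable_of_cont_supp _
      ((hvc.comp (continuous_const.add (continuous_id.const_smul t₀))).mul continuous_psi)
    exact fun z hz => support_subset_psi (by
      simp only [Function.mem_support] at hz ⊢
      intro h0; exact hz (by simp [h0]))
  · -- AEStronglyMeasurable (F' t₀)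
    apply Continuous.aestronglyMeasurable
    exact (((hD.comp (continuous_const.add (continuous_id.const_smul t₀))).clm_apply
      continuous_id').mul continuous_psi)
  · -- bound
    apply Filter.Eventually.of_forall
    intro z t ht
    rcases eq_or_ne (psi z) 0 with h0 | h0
    · simp [h0]
    · have hz1 : ‖z‖ ≤ 1 := by
        have := support_subset_psi (Function.mem_support.mpr h0)
        simpa [Metric.mem_closedBall] using this
      have hyK : x₀ + t • z ∈ Metric.closedBall x₀ (|t₀|+1) := by
        simp only [Metric.mem_closedBall, dist_eq_norm]
        have : ‖x₀ + t • z - x₀‖ = |t| * ‖z‖ := by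
          simp [norm_smul]
        rw [this]
        have ht' : |t - t₀| < 1 := by simpa [Real.dist_eq] using ht
        have : |t| ≤ |t₀| + 1 := by
          have := abs_sub_abs_le_abs_sub t t₀
          linarith
        nlinarith [norm_nonneg z, abs_nonneg t]
      have h1 : |fderiv ℝ v (x₀ + t • z) z| ≤ C₀ := by
        calc |fderiv ℝ v (x₀ + t • z) z| ≤ ‖fderiv ℝ v (x₀ + t • z)‖ * ‖z‖ :=
              (fderiv ℝ v (x₀ + t • z)).le_opNorm z
          _ ≤ C₀ * 1 := by
              apply mul_le_mul (hC₀ _ hyK) hz1 (norm_nonneg z)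
              exact (norm_nonneg _).trans (hC₀ _ (Metric.mem_closedBall_self (by positivity)))
          _ = C₀ := mul_one C₀
      rw [Real.norm_eq_abs, abs_mul, abs_of_nonneg (psi_nonneg z)]
      exact mul_le_mul_of_nonneg_right (h1.trans (le_max_left _ _)) (psi_nonneg z)
  · exact (integrable_of_cont_supp _ (continuous_const.mul continuous_psi)
      (fun z hz => support_subset_psi (by
        simp only [Function.mem_support] at hz ⊢
        intro h0; exact hz (by rw [h0, mul_zero]))))
  · apply Filter.Eventually.of_forall
    intro z t _
    exact (((hdiffv _).hasFDerivAt.comp_hasDerivAt t (path t z))).mul_const (psi z)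

lemma lap_eq (v : E4 → ℝ) (y : E4) :
    lap 4 v y = ∑ i : Fin 4, fderiv ℝ (fderiv ℝ v) y (EuclideanSpace.single i 1)
      (EuclideanSpace.single i 1) := by
  unfold lap
  congr 1
  ext i
  rw [iteratedFDeriv_two_apply]
  simp

lemma G_eq (v : E4 → ℝ) (hv : ContDiff ℝ 2 v) (x₀ : E4) (t : ℝ) :
    (∫ z, (fderiv ℝ v (x₀ + t • z) z) * psi z)
      = ∫ z, (-(t * lap 4 v (x₀ + t • z))) * Psi z := by
  have hD1 : ContDiff ℝ 1 (fderiv ℝ v) := hv.fderiv_right (m := 1) (by norm_num)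
  have hD : Continuous (fderiv ℝ v) := hD1.continuous
  have hDd : Differentiable ℝ (fderiv ℝ v) := hD1.differentiable (by norm_num)
  have hD2 : Continuous (fderiv ℝ (fderiv ℝ v)) :=
    (hD1.fderiv_right (m := 0) (by norm_num)).continuous
  have caff : Continuous (fun z : E4 => x₀ + t • z) :=
    continuous_const.add (continuous_id.const_smul t)
  set e : Fin 4 → E4 := fun i => EuclideanSpace.single i 1 with he
  set f : Fin 4 → E4 → ℝ := fun i z => fderiv ℝ v (x₀ + t • z) (e i) with hf
  -- derivative of f i
  have haff : ∀ z : E4, HasFDerivAt (fun z : E4 => x₀ + t • z)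
      (t • ContinuousLinearMap.id ℝ E4) z := by
    intro z
    exact ((hasFDerivAt_id z).const_smul t).const_add x₀
  have hfd : ∀ (i : Fin 4) (z : E4), HasFDerivAt (f i)
      ((ContinuousLinearMap.apply ℝ ℝ (e i)).comp
        ((fderiv ℝ (fderiv ℝ v) (x₀ + t • z)).comp (t • ContinuousLinearMap.id ℝ E4))) z := by
    intro i z
    have h3 := ((hDd _).hasFDerivAt.comp z (haff z))
    exact (ContinuousLinearMap.apply ℝ ℝ (e i)).hasFDerivAt.comp z h3
  have hfval : ∀ (i : Fin 4) (z : E4), fderiv ℝ (f i) z (e i)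
      = t * fderiv ℝ (fderiv ℝ v) (x₀ + t • z) (e i) (e i) := by
    intro i z
    rw [(hfd i z).fderiv]
    simp
  have hfcont : ∀ i : Fin 4, Continuous (f i) :=
    fun i => (hD.comp caff).clm_apply continuous_const
  have hfdiff : ∀ i : Fin 4, Differentiable ℝ (f i) := fun i z => (hfd i z).differentiableAt
  have hPsidiff : Differentiable ℝ Psi := fun z => (hasFDerivAt_Psi z).differentiableAt
  -- pointwise expansion of the integrand
  have hpt : ∀ z : E4, (fderiv ℝ v (x₀ + t • z) z) * psi z
      = ∑ i : Fin 4, f i z * fderiv ℝ Psi z (e i) := by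
    intro z
    rw [clm_apply_eq_sum (fderiv ℝ v (x₀ + t • z)) z, Finset.sum_mul]
    congr 1
    ext i
    rw [fderiv_Psi_single]
    simp only [hf, he]
    ring
  have hint : ∀ i : Fin 4, Integrable (fun z => f i z * fderiv ℝ Psi z (e i)) := by
    intro i
    have : (fun z => f i z * fderiv ℝ Psi z (e i)) = fun z => f i z * (psi z * z i) := by
      ext z; rw [fderiv_Psi_single]
    rw [this]
    apply integrable_of_cont_supp
    · exact (hfcont i).mul (continuous_psi.mul
        ((EuclideanSpace.proj i : E4 →L[ℝ] ℝ).continuous))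
    · intro z hz
      apply support_subset_psi
      simp only [Function.mem_support] at hz ⊢
      intro h0; exact hz (by rw [h0]; ring)
  calc (∫ z, (fderiv ℝ v (x₀ + t • z) z) * psi z)
      = ∫ z, ∑ i : Fin 4, f i z * fderiv ℝ Psi z (e i) := by
        congr 1; ext z; exact hpt z
    _ = ∑ i : Fin 4, ∫ z, f i z * fderiv ℝ Psi z (e i) :=
        integral_finset_sum _ (fun i _ => hint i)
    _ = ∑ i : Fin 4, -∫ z, fderiv ℝ (f i) z (e i) * Psi z := by
        congr 1
        ext i
        apply integral_mul_fderiv_eq_neg_fderiv_mul_of_integrable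
        · -- Integrable f' * Psi
          have : (fun z => fderiv ℝ (f i) z (e i) * Psi z)
              = fun z => (t * fderiv ℝ (fderiv ℝ v) (x₀ + t • z) (e i) (e i)) * Psi z := by
            ext z; rw [hfval]
          rw [this]
          apply integrable_of_cont_supp
          · exact ((continuous_const.mul (((hD2.comp caff).clm_apply
              continuous_const).clm_apply continuous_const)).mul continuous_Psi)
          · intro z hz
            apply support_subset_Psi
            simp only [Function.mem_support] at hz ⊢
            intro h0; exact hz (by rw [h0, mul_zero])
        · -- Integrable f * fderiv Psi
          exact hint i
        · -- Integrable f * Psi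
          apply integrable_of_cont_supp
          · exact (hfcont i).mul continuous_Psi
          · intro z hz
            apply support_subset_Psi
            simp only [Function.mem_support] at hz ⊢
            intro h0; exact hz (by rw [h0, mul_zero])
        · exact fun x _ => hfdiff i x
        · exact fun x _ => hPsidiff x
    _ = -∑ i : Fin 4, ∫ z, (t * fderiv ℝ (fderiv ℝ v) (x₀ + t • z) (e i) (e i)) * Psi z := by
        rw [← Finset.sum_neg_distrib]
        congr 1
        ext i
        congr 1
        congr 1
        ext z
        rw [hfval]
    _ = -∫ z, ∑ i : Fin 4, (t * fderiv ℝ (fderiv ℝ v) (x₀ + t • z) (e i) (e i)) * Psi z := by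
        rw [integral_finset_sum]
        intro i _
        apply integrable_of_cont_supp
        · exact ((continuous_const.mul (((hD2.comp caff).clm_apply
            continuous_const).clm_apply continuous_const)).mul continuous_Psi)
        · intro z hz
          apply support_subset_Psi
          simp only [Function.mem_support] at hz ⊢
          intro h0; exact hz (by rw [h0, mul_zero])
    _ = ∫ z, (-(t * lap 4 v (x₀ + t • z))) * Psi z := by
        rw [← integral_neg]
        congr 1
        ext z
        rw [lap_eq]
        simp only [he]
        rw [neg_mul, neg_inj, Finset.mul_sum, Finset.sum_mul]

lemma submean (v u : E4 → ℝ) (hv : ContDiff ℝ 2 v) (hu : Continuous u)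
    (hlap : ∀ x, lap 4 v x = -(u x ^ 2))
    (x₀ : E4) (M : ℝ) (hM0 : 0 ≤ M)
    (hM : ∀ w : E4, ‖w‖ ≤ 1 → u (x₀ + w) ^ 2 ≤ M) :
    v x₀ * (∫ z, psi z) ≤ (∫ z, v (x₀ + z) * psi z) + M * (∫ z, -Psi z) / 2 := by
  have caff : ∀ t : ℝ, Continuous (fun z : E4 => x₀ + t • z) := fun t =>
    continuous_const.add (continuous_id.const_smul t)
  set Jn : ℝ := ∫ z, -Psi z with hJn
  set F : ℝ → ℝ := fun t => ∫ z, v (x₀ + t • z) * psi z with hF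
  set H : ℝ → ℝ := fun t => F t + M * Jn * t^2 / 2 with hH
  have hJn0 : 0 ≤ Jn := integral_nonneg (fun z => neg_nonneg.mpr (Psi_nonpos z))
  have hPsiInt : Integrable Psi := integrable_of_cont_supp Psi continuous_Psi support_subset_Psi
  have hIntPsi : (∫ z, Psi z) = -Jn := by
    rw [hJn, integral_neg, neg_neg]
  have hHd : ∀ t : ℝ, HasDerivAt H
      ((∫ z, (fderiv ℝ v (x₀ + t • z) z) * psi z) + M * Jn * t) t := by
    intro t
    apply HasDerivAt.add (F_hasDeriv v hv x₀ t)
    have : HasDerivAt (fun t : ℝ => M * Jn * t ^ 2 / 2) (M * Jn * (2 * t ^ 1) / 2) t :=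
      ((hasDerivAt_pow 2 t).const_mul (M * Jn)).div_const 2
    rw [show M * Jn * t = M * Jn * (2 * t ^ 1) / 2 by ring]
    exact this
  have hGlow : ∀ t ∈ Set.Icc (0:ℝ) 1,
      0 ≤ (∫ z, (fderiv ℝ v (x₀ + t • z) z) * psi z) + M * Jn * t := by
    intro t ht
    rw [G_eq v hv x₀ t]
    have hpt : ∀ z : E4, (t * M) * Psi z ≤ (-(t * lap 4 v (x₀ + t • z))) * Psi z := by
      intro z
      rcases eq_or_ne (Psi z) 0 with h0 | h0
      · rw [h0, mul_zero, mul_zero]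
      · have hz1 : ‖z‖ ≤ 1 := by
          have := support_subset_Psi (Function.mem_support.mpr h0)
          simpa [Metric.mem_closedBall] using this
        have hw : ‖t • z‖ ≤ 1 := by
          rw [norm_smul, Real.norm_eq_abs, abs_of_nonneg ht.1]
          nlinarith [ht.2, norm_nonneg z]
        have hu2 : u (x₀ + t • z) ^ 2 ≤ M := hM _ hw
        rw [hlap]
        have hrw : -(t * -(u (x₀ + t • z) ^ 2)) = t * (u (x₀ + t • z) ^ 2) := by ring
        rw [hrw]
        have h1 : t * u (x₀ + t • z) ^ 2 ≤ t * M :=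
          mul_le_mul_of_nonneg_left hu2 ht.1
        exact mul_le_mul_of_nonpos_right h1 (Psi_nonpos z)
    have hint1 : Integrable (fun z => (t * M) * Psi z) := hPsiInt.const_mul _
    have hint2 : Integrable (fun z => (-(t * lap 4 v (x₀ + t • z))) * Psi z) := by
      have hcl : Continuous (fun z => lap 4 v (x₀ + t • z)) := by
        have hD2 : Continuous (fderiv ℝ (fderiv ℝ v)) :=
          ((hv.fderiv_right (m := 1) (by norm_num)).fderiv_right (m := 0) (by norm_num)).continuous
        have : Continuous (fun y => lap 4 v y) := by
          simp only [lap_eq]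
          apply continuous_finset_sum
          intro i _
          exact (hD2.clm_apply continuous_const).clm_apply continuous_const
        exact this.comp (caff t)
      apply integrable_of_cont_supp
      · exact (continuous_const.mul hcl).neg.mul continuous_Psi
      · intro z hz
        apply support_subset_Psi
        simp only [Function.mem_support] at hz ⊢
        intro h0; exact hz (by rw [h0, mul_zero])
    have := integral_mono hint1 hint2 hpt
    rw [integral_const_mul, hIntPsi] at this
    have h2 : t * M * -Jn + M * Jn * t = 0 := by ring
    linarith
  have hmono : MonotoneOn H (Set.Icc (0:ℝ) 1) := by
    apply monotoneOn_of_deriv_nonneg (convex_Icc 0 1)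
    · exact fun t _ => ((hHd t).continuousAt).continuousWithinAt
    · exact fun t _ => ((hHd t).differentiableAt).differentiableWithinAt
    · intro t ht
      rw [interior_Icc] at ht
      rw [(hHd t).deriv]
      exact hGlow t ⟨ht.1.le, ht.2.le⟩
  have h01 := hmono (Set.mem_Icc.mpr ⟨le_refl 0, zero_le_one⟩)
    (Set.mem_Icc.mpr ⟨zero_le_one, le_refl 1⟩) zero_le_one
  have hH0 : H 0 = v x₀ * ∫ z, psi z := by
    simp only [hH, hF]
    norm_num
    rw [← integral_const_mul]
  have hH1 : H 1 = (∫ z, v (x₀ + z) * psi z) + M * Jn / 2 := by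
    simp only [hH, hF]
    norm_num
  rw [hH0, hH1] at h01
  exact h01

lemma self_le_one_add_pow4 (a : ℝ) (ha : 0 ≤ a) : a ≤ 1 + a ^ 4 := by
  nlinarith [sq_nonneg (a^2 - 1), sq_nonneg (a - 1), sq_nonneg a, sq_nonneg (a+1)]

set_option maxHeartbeats 1000000 in
/-- Lemma 3.6 (ii): if `u = O(|x|^K)` and `-Δv = u²` with `∫ v⁴ < ∞`, then
`v = O(|x|^{2K})` at infinity. -/
theorem v_polynomial_growth_4d
    (K : ℝ) (hK : 0 < K)
    (u v : EuclideanSpace ℝ (Fin 4) → ℝ)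
    (hu_cont : Continuous u)
    (hu_growth : ∃ C R : ℝ, 0 < C ∧ 0 < R ∧
      ∀ x : EuclideanSpace ℝ (Fin 4), R ≤ ‖x‖ → |u x| ≤ C * ‖x‖ ^ K)
    (hv_smooth : ContDiff ℝ 2 v) (hv_nonneg : ∀ x, 0 ≤ v x)
    (hv_eq : ∀ x, -lap 4 v x = u x ^ 2)
    (hv4 : Integrable (fun x => v x ^ 4)) :
    ∃ C R : ℝ, 0 < C ∧ 0 < R ∧
      ∀ x : EuclideanSpace ℝ (Fin 4), R ≤ ‖x‖ → |v x| ≤ C * ‖x‖ ^ (2 * K) := by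
  obtain ⟨C, R, hC, hR, hgrow⟩ := hu_growth
  have hlap : ∀ x, lap 4 v x = -(u x ^ 2) := fun x => by
    have := hv_eq x; linarith
  obtain ⟨I, hI⟩ : ∃ r : ℝ, r = ∫ z, psi z := ⟨_, rfl⟩
  obtain ⟨Jn, hJn⟩ : ∃ r : ℝ, r = ∫ z, -Psi z := ⟨_, rfl⟩
  have hJn0 : 0 ≤ Jn := hJn ▸ integral_nonneg (fun z => neg_nonneg.mpr (Psi_nonpos z))
  have hIpos : 0 < I := by
    rw [hI, integral_pos_iff_support_of_nonneg (fun z => psi_nonneg z)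
      (integrable_of_cont_supp psi continuous_psi support_subset_psi)]
    apply lt_of_lt_of_le (Metric.measure_ball_pos volume (0:E4) one_pos)
    apply measure_mono
    intro z hz
    have hz1 : ‖z‖ < 1 := by simpa using mem_ball_zero_iff.mp hz
    have hQ : Q z < 1 := by rw [Q_eq_norm_sq]; nlinarith [norm_nonneg z]
    have : 0 < psi z := by
      apply mul_pos (by norm_num)
      exact lt_max_of_lt_left (by linarith)
    exact Function.mem_support.mpr (ne_of_gt this)
  obtain ⟨vol, hvol⟩ : ∃ r : ℝ, r = (volume (Metric.closedBall (0:E4) 1)).toReal := ⟨_, rfl⟩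
  have hvol0 : 0 ≤ vol := hvol ▸ ENNReal.toReal_nonneg
  obtain ⟨V4, hV4⟩ : ∃ r : ℝ, r = ∫ x, v x ^ 4 := ⟨_, rfl⟩
  have hv4nn : 0 ≤ V4 := hV4 ▸ integral_nonneg (fun x => by positivity)
  obtain ⟨A₀, hA0⟩ : ∃ r : ℝ, r = 4 * vol + 4 * V4 := ⟨_, rfl⟩
  have hA00 : 0 ≤ A₀ := by rw [hA0]; positivity
  obtain ⟨P2, hP2⟩ : ∃ r : ℝ, r = (2:ℝ)^(2*K) := ⟨_, rfl⟩
  have hP20 : 0 ≤ P2 := hP2 ▸ Real.rpow_nonneg (by norm_num) _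
  obtain ⟨B, hB⟩ : ∃ r : ℝ, r = A₀ + (C^2 * P2) * Jn / 2 := ⟨_, rfl⟩
  have hB0 : 0 ≤ B := by rw [hB]; positivity
  refine ⟨B / I + 1, max (R + 1) 1, by positivity, by positivity, ?_⟩
  intro x hx
  have hx1 : 1 ≤ ‖x‖ := le_trans (le_max_right _ _) hx
  have hxR : R + 1 ≤ ‖x‖ := le_trans (le_max_left _ _) hx
  have h2x : (0:ℝ) ≤ 2 * ‖x‖ := by positivity
  obtain ⟨X, hX⟩ : ∃ r : ℝ, r = ‖x‖^(2*K) := ⟨_, rfl⟩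
  have hX1 : (1:ℝ) ≤ X := hX ▸ Real.one_le_rpow hx1 (by positivity)
  have hX0 : (0:ℝ) ≤ X := by linarith
  obtain ⟨M, hM⟩ : ∃ r : ℝ, r = C^2 * (2 * ‖x‖)^(2*K) := ⟨_, rfl⟩
  have hM0 : 0 ≤ M := by
    rw [hM]
    have := Real.rpow_nonneg h2x (2*K)
    positivity
  have hMeq : M = C^2 * P2 * X := by
    rw [hM, hP2, hX, Real.mul_rpow (by norm_num) (norm_nonneg x)]
    ring
  have hMbound : ∀ w : E4, ‖w‖ ≤ 1 → u (x + w) ^ 2 ≤ M := by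
    intro w hw
    have hlow : R ≤ ‖x + w‖ := by
      have h1 : ‖x‖ - ‖w‖ ≤ ‖x + w‖ := by
        have := norm_sub_le (x + w) w
        simp only [add_sub_cancel_right] at this
        linarith
      linarith
    have hub : ‖x + w‖ ≤ 2 * ‖x‖ := by
      have := norm_add_le x w
      linarith
    have habs := hgrow (x + w) hlow
    have h2 : C * ‖x + w‖ ^ K ≤ C * (2 * ‖x‖) ^ K :=
      mul_le_mul_of_nonneg_left (Real.rpow_le_rpow (norm_nonneg _) hub hK.le) hC.le
    have h3 : |u (x + w)| ≤ C * (2 * ‖x‖) ^ K := habs.trans h2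
    have h4 : u (x + w) ^ 2 ≤ (C * (2 * ‖x‖) ^ K) ^ 2 := by
      rw [← sq_abs]
      exact pow_le_pow_left₀ (abs_nonneg _) h3 2
    calc u (x + w) ^ 2 ≤ (C * (2 * ‖x‖) ^ K) ^ 2 := h4
      _ = C ^ 2 * ((2 * ‖x‖) ^ K) ^ 2 := by ring
      _ = M := by
          rw [hM]
          congr 1
          rw [← Real.rpow_natCast ((2 * ‖x‖) ^ K) 2, ← Real.rpow_mul h2x]
          norm_num
          ring_nf
  -- apply submean
  have hsub := submean v u hv_smooth hu_cont hlap x M hM0 hMbound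
  rw [← hI, ← hJn] at hsub
  -- bound the weighted average
  have hF1 : (∫ z, v (x + z) * psi z) ≤ A₀ := by
    have hrhs_int1 : Integrable
        (Set.indicator (Metric.closedBall (0:E4) 1) (fun _ => (4:ℝ))) := by
      rw [integrable_indicator_iff measurableSet_closedBall]
      exact integrableOn_const measure_closedBall_lt_top.ne
    have hrhs_int2 : Integrable (fun z => 4 * v (x + z) ^ 4) :=
      ((hv4.comp_add_left x).const_mul 4)
    have hlhs_int : Integrable (fun z => v (x + z) * psi z) := by
      apply integrable_of_cont_supp
      · exact (hv_smooth.continuous.comp (continuous_const.add continuous_id')).mul continuous_psi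
      · intro z hz
        apply support_subset_psi
        simp only [Function.mem_support] at hz ⊢
        intro h0; exact hz (by rw [h0, mul_zero])
    have hpt : ∀ z : E4, v (x + z) * psi z ≤
        Set.indicator (Metric.closedBall (0:E4) 1) (fun _ => (4:ℝ)) z + 4 * v (x + z) ^ 4 := by
      intro z
      rcases le_or_gt ‖z‖ 1 with hz | hz
      · have hind : Set.indicator (Metric.closedBall (0:E4) 1) (fun _ => (4:ℝ)) z = 4 := by
          rw [Set.indicator_of_mem]
          simpa [Metric.mem_closedBall] using hz
        rw [hind]
        have h1 : v (x + z) * psi z ≤ v (x + z) * 4 :=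
          mul_le_mul_of_nonneg_left (psi_le_four z) (hv_nonneg _)
        have h2 : v (x + z) ≤ 1 + v (x + z) ^ 4 := self_le_one_add_pow4 _ (hv_nonneg _)
        nlinarith [hv_nonneg (x + z)]
      · have hpsi0 : psi z = 0 := by
          apply psi_zero_of
          rw [Q_eq_norm_sq]; nlinarith
        rw [hpsi0, mul_zero]
        have : (0:ℝ) ≤ Set.indicator (Metric.closedBall (0:E4) 1) (fun _ => (4:ℝ)) z :=
          Set.indicator_nonneg (fun _ _ => by norm_num) z
        nlinarith [pow_nonneg (hv_nonneg (x + z)) 4]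
    have hmono := integral_mono hlhs_int (hrhs_int1.add hrhs_int2) hpt
    simp only [Pi.add_apply] at hmono
    rw [integral_add hrhs_int1 hrhs_int2, integral_indicator_const _ measurableSet_closedBall,
      integral_const_mul, integral_add_left_eq_self (fun y => v y ^ 4) x] at hmono
    rw [hA0, hvol, hV4]
    calc (∫ z, v (x + z) * psi z)
        ≤ (volume (Metric.closedBall (0:E4) 1)).toReal • (4:ℝ)
            + 4 * ∫ y, v y ^ 4 := hmono
      _ = 4 * (volume (Metric.closedBall (0:E4) 1)).toReal + 4 * ∫ y, v y ^ 4 := by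
          rw [smul_eq_mul]; ring
  -- combine
  have hkey : v x * I ≤ B * X := by
    have hA₀le : A₀ ≤ A₀ * X := le_mul_of_one_le_right hA00 hX1
    have hMJn : M * Jn / 2 = (C^2 * P2) * Jn / 2 * X := by rw [hMeq]; ring
    have hstep : v x * I ≤ A₀ + M * Jn / 2 := by
      linarith [hsub, hF1]
    rw [hB]
    calc v x * I ≤ A₀ + M * Jn / 2 := hstep
      _ ≤ A₀ * X + (C^2 * P2) * Jn / 2 * X := by
          rw [hMJn] at *
          linarith
      _ = (A₀ + C ^ 2 * P2 * Jn / 2) * X := by ring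
  rw [abs_of_nonneg (hv_nonneg x), ← hX]
  have hvx : v x ≤ B * X / I := (le_div_iff₀ hIpos).mpr hkey
  calc v x ≤ B * X / I := hvx
    _ = B / I * X := by ring
    _ ≤ (B / I + 1) * X := by nlinarith
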